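/- For all ε > 0, σ_x > 0, σ_k > 0 and all Schwartz functions f, g : ℝ → ℂ, the smoothed Wigner transform of the pair (f, x·g(x)) satisfies, for every (x,k) ∈ ℝ²: W̃^{σ_x,σ_k;ε}[f, y·g(y)](x,k) = x·W̃^{σ_x,σ_k;ε}[f,g](x,k) − (iε/(4π))·∂_k W̃^{σ_x,σ_k;ε}[f,g](x,k) + (ε σ_x²/(4π))·∂_x W̃^{σ_x,σ_k;ε}[f,g](x,k). -/

import Mathlib

set_option maxHeartbeats 1000000


open Real MeasureTheory

/-- The scaled Wigner transform `W^ε[f,g](x,k) = ∫ e^{-2πiky} f(x+εy/2) conj(g(x-εy/2)) dy`. -/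
noncomputable def wigner (ε : ℝ) (f g : ℝ → ℂ) (x k : ℝ) : ℂ :=
  ∫ y : ℝ, Complex.exp (-(2 * π * Complex.I * k * y)) *
    f (x + ε * y / 2) * (starRingEnd ℂ) (g (x - ε * y / 2))

/-- The smoothed Wigner transform: the Wigner transform convolved with the normalized Gaussian
kernel `(2/(ε σx σk)) exp(-2π(x-x')²/(ε σx²) - 2π(k-k')²/(ε σk²))`. -/
noncomputable def swt (ε σx σk : ℝ) (f g : ℝ → ℂ) (x k : ℝ) : ℂ :=
  (2 / (ε * σx * σk) : ℂ) *
    ∫ x' : ℝ, ∫ k' : ℝ,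
      (Real.exp (-(2 * π * (x - x')^2 / (ε * σx^2)) - 2 * π * (k - k')^2 / (ε * σk^2)) : ℂ) *
        wigner ε f g x' k'


/-- 1D: `(1+|t-a|) e^{-c (t-a)²}` is integrable. -/
lemma int1d (c a : ℝ) (hc : 0 < c) :
    Integrable (fun t : ℝ => (1 + |t - a|) * Real.exp (-(c * (t - a)^2))) := by
  have h0 : Integrable (fun u : ℝ => (1 + |u|) * Real.exp (-(c * u^2))) := by
    have h1 : Integrable (fun u : ℝ => Real.exp (-c * u^2)) := integrable_exp_neg_mul_sq hc
    have h2 : Integrable (fun u : ℝ => |u * Real.exp (-c * u^2)|) :=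
      (integrable_mul_exp_neg_mul_sq hc).abs
    have := h1.add h2
    refine this.congr (Filter.Eventually.of_forall fun u => ?_)
    simp only [Pi.add_apply, abs_mul, abs_of_pos (Real.exp_pos _), neg_mul]
    ring
  simpa using h0.comp_sub_right a

/-- 2D master: `(1+|p.1-x|)e^{-c₁(p.1-x)²} (1+|p.2|)e^{-c₂ p.2²}` integrable on ℝ². -/
lemma int2d (x c1 c2 : ℝ) (h1 : 0 < c1) (h2 : 0 < c2) :
    Integrable (fun p : ℝ × ℝ =>
      ((1 + |p.1 - x|) * Real.exp (-(c1 * (p.1 - x)^2))) *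
      ((1 + |p.2|) * Real.exp (-(c2 * p.2^2)))) := by
  rw [Measure.volume_eq_prod]
  exact (int1d c1 x h1).mul_prod (by simpa using int1d c2 0 h2)

/-- integrability of a shifted Cauchy-type decay -/
lemma intCauchy (R a : ℝ) (hR : R ≠ 0) :
    Integrable (fun y : ℝ => (1 + (R * y + a)^2)⁻¹) :=
  (integrable_inv_one_add_sq.comp_add_right a).comp_mul_left' hR

lemma gauss_ft (b : ℝ) (hb : 0 < b) (k y : ℝ) :
    ∫ k' : ℝ, (Real.exp (-(b * (k' - k)^2)) : ℂ) * Complex.exp ((-(2*π*k'*y) : ℝ) * Complex.I)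
      = ((π : ℂ)/(b : ℂ)) ^ (1/2 : ℂ) * (Real.exp (-(π^2/b * y^2)) : ℂ) *
        Complex.exp ((-(2*π*k*y) : ℝ) * Complex.I) := by
  have hshift := MeasureTheory.integral_add_right_eq_self (μ := volume)
    (fun k' : ℝ => (Real.exp (-(b * (k' - k)^2)) : ℂ) *
      Complex.exp ((-(2*π*k'*y) : ℝ) * Complex.I)) k
  rw [← hshift]
  have hres : ∀ u : ℝ,
      (Real.exp (-(b * (u + k - k)^2)) : ℂ) * Complex.exp ((-(2*π*(u+k)*y) : ℝ) * Complex.I)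
      = (Complex.exp (Complex.I * ((-(2*π*y) : ℝ) : ℂ) * u) * Complex.exp (-(b:ℂ) * u^2)) *
        Complex.exp ((-(2*π*k*y) : ℝ) * Complex.I) := by
    intro u
    rw [Complex.ofReal_exp, ← Complex.exp_add, ← Complex.exp_add, ← Complex.exp_add]
    congr 1
    push_cast
    ring
  simp only [hres]
  rw [MeasureTheory.integral_mul_const, fourierIntegral_gaussian (by simpa using hb) _]
  congr 1
  congr 1
  rw [Complex.ofReal_exp]
  congr 1
  have hbne : (b:ℂ) ≠ 0 := by exact_mod_cast hb.ne'
  push_cast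
  field_simp
  ring

noncomputable def phi (c : ℂ) (cx d ε : ℝ) (F G : ℝ → ℂ) (x k : ℝ) (p : ℝ × ℝ) : ℂ :=
  c * (Real.exp (-(cx * (x - p.1)^2)) : ℂ) * (Real.exp (-(d * p.2^2)) : ℂ) *
    Complex.exp ((-(2*π*k*p.2) : ℝ) * Complex.I) * F (p.1 + ε*p.2/2) * G (p.1 - ε*p.2/2)

lemma norm_phi (c : ℂ) (cx d ε : ℝ) (F G : ℝ → ℂ) (x k : ℝ) (p : ℝ × ℝ) :
    ‖phi c cx d ε F G x k p‖ = ‖c‖ * Real.exp (-(cx * (x - p.1)^2)) * Real.exp (-(d * p.2^2)) *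
      ‖F (p.1 + ε*p.2/2)‖ * ‖G (p.1 - ε*p.2/2)‖ := by
  unfold phi
  simp only [norm_mul, Complex.norm_real, Real.norm_eq_abs,
    Complex.norm_exp_ofReal_mul_I, abs_of_pos (Real.exp_pos _), mul_one]

lemma continuous_phi (c : ℂ) (cx d ε : ℝ) {F G : ℝ → ℂ} (hF : Continuous F) (hG : Continuous G)
    (x k : ℝ) : Continuous (phi c cx d ε F G x k) := by
  unfold phi; fun_prop
lemma integrable_weight_phi {c : ℂ} {cx d : ℝ} (ε : ℝ) (hcx : 0 < cx) (hd : 0 < d)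
    {F G : ℝ → ℂ} (hFc : Continuous F) (hGc : Continuous G)
    {MF MG : ℝ} (hMF : ∀ t, ‖F t‖ ≤ MF) (hMG : ∀ t, ‖G t‖ ≤ MG) (x k : ℝ)
    {w : ℝ × ℝ → ℂ} (hw : Continuous w) {Cw : ℝ}
    (hwb : ∀ p : ℝ × ℝ, ‖w p‖ ≤ Cw * ((1 + |p.1 - x|) * (1 + |p.2|))) :
    Integrable (fun p : ℝ × ℝ => w p * phi c cx d ε F G x k p) := by
  have hMF0 : 0 ≤ MF := le_trans (norm_nonneg _) (hMF 0)
  have hMG0 : 0 ≤ MG := le_trans (norm_nonneg _) (hMG 0)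
  have key := (int2d x cx d hcx hd).const_mul (Cw * (‖c‖ * MF * MG))
  refine key.mono' ((hw.mul (continuous_phi c cx d ε hFc hGc x k)).aestronglyMeasurable)
    (Filter.Eventually.of_forall fun p => ?_)
  rw [norm_mul, norm_phi]
  have hsq : (x - p.1)^2 = (p.1 - x)^2 := by ring
  rw [hsq]
  have h1 : ‖c‖ * Real.exp (-(cx * (p.1 - x)^2)) * Real.exp (-(d * p.2^2)) *
      ‖F (p.1 + ε*p.2/2)‖ * ‖G (p.1 - ε*p.2/2)‖ ≤
      ‖c‖ * Real.exp (-(cx * (p.1 - x)^2)) * Real.exp (-(d * p.2^2)) * MF * MG := by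
    gcongr <;> first | exact hMF _ | exact hMG _
  have h2 : 0 ≤ ‖c‖ * Real.exp (-(cx * (p.1 - x)^2)) * Real.exp (-(d * p.2^2)) *
      ‖F (p.1 + ε*p.2/2)‖ * ‖G (p.1 - ε*p.2/2)‖ := by positivity
  calc ‖w p‖ * (‖c‖ * Real.exp (-(cx * (p.1 - x)^2)) * Real.exp (-(d * p.2^2)) *
        ‖F (p.1 + ε*p.2/2)‖ * ‖G (p.1 - ε*p.2/2)‖)
      ≤ (Cw * ((1 + |p.1 - x|) * (1 + |p.2|))) *
        (‖c‖ * Real.exp (-(cx * (p.1 - x)^2)) * Real.exp (-(d * p.2^2)) * MF * MG) :=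
        mul_le_mul (hwb p) h1 h2 (le_trans (norm_nonneg _) (hwb p))
    _ = Cw * (‖c‖ * MF * MG) *
        ((1 + |p.1 - x|) * Real.exp (-(cx * (p.1 - x)^2)) *
          ((1 + |p.2|) * Real.exp (-(d * p.2^2)))) := by ring

lemma hasDerivAt_phi_k (c : ℂ) (cx d ε : ℝ) (F G : ℝ → ℂ) (x k : ℝ) (p : ℝ × ℝ) :
    HasDerivAt (fun k' : ℝ => phi c cx d ε F G x k' p)
      (((-(2*π*p.2) : ℝ) : ℂ) * Complex.I * phi c cx d ε F G x k p) k := by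
  have h1 : HasDerivAt (fun k' : ℝ => -(2*π*k'*p.2)) (-(2*π*p.2)) k := by
    simpa using (((hasDerivAt_id k).const_mul (2*π)).mul_const p.2).fun_neg
  have h2 := ((h1.ofReal_comp).mul_const Complex.I).cexp
  have h3 := ((h2.const_mul (c * (Real.exp (-(cx * (x - p.1)^2)) : ℂ) *
      (Real.exp (-(d * p.2^2)) : ℂ))).mul_const (F (p.1 + ε*p.2/2))).mul_const
      (G (p.1 - ε*p.2/2))
  refine h3.congr_deriv ?_
  unfold phi
  ring

lemma hasDerivAt_phi_x (c : ℂ) (cx d ε : ℝ) (F G : ℝ → ℂ) (x k : ℝ) (p : ℝ × ℝ) :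
    HasDerivAt (fun x' : ℝ => phi c cx d ε F G x' k p)
      (((-(2*cx*(x - p.1)) : ℝ) : ℂ) * phi c cx d ε F G x k p) x := by
  have h0 : HasDerivAt (fun x' : ℝ => -(cx * (x' - p.1)^2)) (-(2*cx*(x - p.1))) x := by
    have := ((((hasDerivAt_id x).sub_const p.1).pow 2).const_mul cx).fun_neg
    simp only [id_eq] at this
    refine this.congr_deriv ?_
    ring
  have h1 := h0.exp
  have h2 := h1.ofReal_comp
  have h3 := ((((h2.const_mul c).mul_const ((Real.exp (-(d * p.2^2)) : ℝ) : ℂ)).mul_const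
      (Complex.exp ((-(2*π*k*p.2) : ℝ) * Complex.I))).mul_const
      (F (p.1 + ε*p.2/2))).mul_const (G (p.1 - ε*p.2/2))
  refine h3.congr_deriv ?_
  unfold phi
  push_cast
  ring
lemma norm_phi_le (c : ℂ) (cx d ε : ℝ) {F G : ℝ → ℂ} {MF MG : ℝ}
    (hMF : ∀ t, ‖F t‖ ≤ MF) (hMG : ∀ t, ‖G t‖ ≤ MG) (x k : ℝ) (p : ℝ × ℝ) :
    ‖phi c cx d ε F G x k p‖ ≤
      ‖c‖ * MF * MG * (Real.exp (-(cx * (p.1 - x)^2)) * Real.exp (-(d * p.2^2))) := by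
  have hMG0 : 0 ≤ MG := le_trans (norm_nonneg _) (hMG 0)
  rw [norm_phi, show (x - p.1)^2 = (p.1 - x)^2 from by ring]
  have h1 : ‖c‖ * Real.exp (-(cx * (p.1 - x)^2)) * Real.exp (-(d * p.2^2)) *
      ‖F (p.1 + ε*p.2/2)‖ * ‖G (p.1 - ε*p.2/2)‖ ≤
      ‖c‖ * Real.exp (-(cx * (p.1 - x)^2)) * Real.exp (-(d * p.2^2)) * MF * MG := by
    have hMF0 : 0 ≤ MF := le_trans (norm_nonneg _) (hMF 0)
    gcongr <;> first | exact hMF _ | exact hMG _ | exact mul_nonneg (by positivity) hMF0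
  exact h1.trans_eq (by ring)

lemma hasDerivAt_int_phi_k (c : ℂ) {cx d : ℝ} (ε : ℝ) (hcx : 0 < cx) (hd : 0 < d)
    {F G : ℝ → ℂ} (hFc : Continuous F) (hGc : Continuous G)
    {MF MG : ℝ} (hMF : ∀ t, ‖F t‖ ≤ MF) (hMG : ∀ t, ‖G t‖ ≤ MG) (x k : ℝ) :
    HasDerivAt (fun k' : ℝ => ∫ p : ℝ × ℝ, phi c cx d ε F G x k' p)
      (∫ p : ℝ × ℝ, ((-(2*π*p.2) : ℝ) : ℂ) * Complex.I * phi c cx d ε F G x k p) k := by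
  have hbd : Integrable (fun p : ℝ × ℝ =>
      (2*π*(‖c‖*MF*MG)) * ((1 + |p.1 - x|) * Real.exp (-(cx * (p.1 - x)^2)) *
        ((1 + |p.2|) * Real.exp (-(d * p.2^2))))) :=
    (int2d x cx d hcx hd).const_mul _
  refine (hasDerivAt_integral_of_dominated_loc_of_deriv_le (s := Metric.ball k 1)
    (F' := fun k' (p : ℝ × ℝ) => ((-(2*π*p.2) : ℝ) : ℂ) * Complex.I * phi c cx d ε F G x k' p)
    (Metric.ball_mem_nhds k one_pos)
    (Filter.Eventually.of_forall fun k' =>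
      (continuous_phi c cx d ε hFc hGc x k').aestronglyMeasurable)
    ?_ ?_ ?_ hbd ?_).2
  · have h := integrable_weight_phi (c := c) ε hcx hd hFc hGc hMF hMG x k
      (w := fun _ => (1 : ℂ)) continuous_const (Cw := 1)
      (fun p => by
        have h1 : (0:ℝ) ≤ |p.1 - x| := abs_nonneg _
        have h2 : (0:ℝ) ≤ |p.2| := abs_nonneg _
        simp only [norm_one]
        nlinarith)
    simpa using h
  · exact (((Complex.continuous_ofReal.comp (by fun_prop : Continuous fun p : ℝ × ℝ =>
      -(2*π*p.2))).mul continuous_const).mul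
      (continuous_phi c cx d ε hFc hGc x k)).aestronglyMeasurable
  · refine Filter.Eventually.of_forall fun p => fun k' _ => ?_
    rw [norm_mul, norm_mul, Complex.norm_I, mul_one, Complex.norm_real, Real.norm_eq_abs]
    have hr : |(-(2*π*p.2))| ≤ 2*π*(1+|p.2|) := by
      rw [abs_neg, abs_mul, abs_of_pos (by positivity : (0:ℝ) < 2*π)]
      nlinarith [pi_pos, abs_nonneg p.2]
    have hphi := norm_phi_le c cx d ε hMF hMG x k' p
    have hMF0 : 0 ≤ MF := le_trans (norm_nonneg _) (hMF 0)
    have hMG0 : 0 ≤ MG := le_trans (norm_nonneg _) (hMG 0)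
    have hc1 : 0 ≤ ‖c‖ * MF * MG := mul_nonneg (mul_nonneg (norm_nonneg c) hMF0) hMG0
    calc |(-(2*π*p.2))| * ‖phi c cx d ε F G x k' p‖
        ≤ (2*π*(1+|p.2|)) * (‖c‖ * MF * MG *
            (Real.exp (-(cx * (p.1 - x)^2)) * Real.exp (-(d * p.2^2)))) :=
          mul_le_mul hr hphi (norm_nonneg _) (by positivity)
      _ ≤ _ := by
          have h1X : (1:ℝ) ≤ 1 + |p.1 - x| := by linarith [abs_nonneg (p.1 - x)]
          nlinarith [mul_le_mul_of_nonneg_left h1X (show (0:ℝ) ≤ (2*π*(1+|p.2|)) *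
            (‖c‖ * MF * MG * (Real.exp (-(cx * (p.1 - x)^2)) * Real.exp (-(d * p.2^2))))
            from mul_nonneg (by positivity) (mul_nonneg hc1 (by positivity)))]
  · exact Filter.Eventually.of_forall fun p => fun k' _ => hasDerivAt_phi_k c cx d ε F G x k' p
lemma hasDerivAt_int_phi_x (c : ℂ) {cx d : ℝ} (ε : ℝ) (hcx : 0 < cx) (hd : 0 < d)
    {F G : ℝ → ℂ} (hFc : Continuous F) (hGc : Continuous G)
    {MF MG : ℝ} (hMF : ∀ t, ‖F t‖ ≤ MF) (hMG : ∀ t, ‖G t‖ ≤ MG) (x k : ℝ) :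
    HasDerivAt (fun x' : ℝ => ∫ p : ℝ × ℝ, phi c cx d ε F G x' k p)
      (∫ p : ℝ × ℝ, ((-(2*cx*(x - p.1)) : ℝ) : ℂ) * phi c cx d ε F G x k p) x := by
  have hMF0 : 0 ≤ MF := le_trans (norm_nonneg _) (hMF 0)
  have hMG0 : 0 ≤ MG := le_trans (norm_nonneg _) (hMG 0)
  have hc1 : 0 ≤ ‖c‖ * MF * MG := mul_nonneg (mul_nonneg (norm_nonneg c) hMF0) hMG0
  have hbd : Integrable (fun p : ℝ × ℝ =>
      (2*cx*Real.exp cx*(‖c‖*MF*MG)) * ((1 + |p.1 - x|) * Real.exp (-(cx/2 * (p.1 - x)^2)) *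
        ((1 + |p.2|) * Real.exp (-(d * p.2^2))))) :=
    (int2d x (cx/2) d (by positivity) hd).const_mul _
  refine (hasDerivAt_integral_of_dominated_loc_of_deriv_le (s := Metric.ball x 1)
    (F' := fun x' (p : ℝ × ℝ) => ((-(2*cx*(x' - p.1)) : ℝ) : ℂ) * phi c cx d ε F G x' k p)
    (Metric.ball_mem_nhds x one_pos)
    (Filter.Eventually.of_forall fun x' =>
      (continuous_phi c cx d ε hFc hGc x' k).aestronglyMeasurable)
    ?_ ?_ ?_ hbd ?_).2
  · have h := integrable_weight_phi (c := c) ε hcx hd hFc hGc hMF hMG x k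
      (w := fun _ => (1 : ℂ)) continuous_const (Cw := 1)
      (fun p => by
        have h1 : (0:ℝ) ≤ |p.1 - x| := abs_nonneg _
        have h2 : (0:ℝ) ≤ |p.2| := abs_nonneg _
        simp only [norm_one]
        nlinarith)
    simpa using h
  · refine Continuous.aestronglyMeasurable ?_
    have : Continuous fun p : ℝ × ℝ => ((-(2*cx*(x - p.1)) : ℝ) : ℂ) := by fun_prop
    exact this.mul (continuous_phi c cx d ε hFc hGc x k)
  · refine Filter.Eventually.of_forall fun p => fun x' hx' => ?_
    have hxx : |x' - x| ≤ 1 := le_of_lt (by simpa [Real.dist_eq] using hx')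
    have hxx2 : (x' - x)^2 ≤ 1 := by nlinarith [abs_nonneg (x' - x), _root_.sq_abs (x' - x)]
    rw [norm_mul, Complex.norm_real, Real.norm_eq_abs]
    have hr : |(-(2*cx*(x' - p.1)))| ≤ 2*cx*(1 + |p.1 - x|) := by
      rw [abs_neg, abs_mul, abs_of_pos (by positivity : (0:ℝ) < 2*cx)]
      have : |x' - p.1| ≤ |x' - x| + |x - p.1| := abs_sub_le x' x p.1
      have h2 : |x - p.1| = |p.1 - x| := abs_sub_comm x p.1
      nlinarith [hcx]
    have hexp : Real.exp (-(cx * (p.1 - x')^2)) ≤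
        Real.exp cx * Real.exp (-(cx/2 * (p.1 - x)^2)) := by
      rw [← Real.exp_add]
      apply Real.exp_le_exp.2
      nlinarith [mul_le_mul_of_nonneg_left
        (show (p.1 - x)^2 ≤ 2*(p.1 - x')^2 + 2 from by
          nlinarith [sq_nonneg ((p.1 - x') - (x' - x))]) (le_of_lt hcx)]
    have hphi : ‖phi c cx d ε F G x' k p‖ ≤ ‖c‖ * MF * MG *
        ((Real.exp cx * Real.exp (-(cx/2 * (p.1 - x)^2))) * Real.exp (-(d * p.2^2))) := by
      refine (norm_phi_le c cx d ε hMF hMG x' k p).trans ?_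
      have h0 : (0:ℝ) < Real.exp (-(d * p.2^2)) := Real.exp_pos _
      refine mul_le_mul_of_nonneg_left ?_ hc1
      exact mul_le_mul_of_nonneg_right hexp h0.le
    calc |(-(2*cx*(x' - p.1)))| * ‖phi c cx d ε F G x' k p‖
        ≤ (2*cx*(1 + |p.1 - x|)) * (‖c‖ * MF * MG *
            ((Real.exp cx * Real.exp (-(cx/2 * (p.1 - x)^2))) * Real.exp (-(d * p.2^2)))) :=
          mul_le_mul hr hphi (norm_nonneg _)
            (by positivity)
      _ ≤ _ := by
          have h1Y : (1:ℝ) ≤ 1 + |p.2| := by linarith [abs_nonneg p.2]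
          nlinarith [mul_le_mul_of_nonneg_left h1Y (show (0:ℝ) ≤ (2*cx*(1 + |p.1 - x|)) *
            (‖c‖ * MF * MG * ((Real.exp cx * Real.exp (-(cx/2 * (p.1 - x)^2))) *
              Real.exp (-(d * p.2^2)))) from mul_nonneg (by positivity)
              (mul_nonneg hc1 (by positivity)))]
  · exact Filter.Eventually.of_forall fun p => fun x' _ => hasDerivAt_phi_x c cx d ε F G x' k p
noncomputable def ftc (b : ℝ) : ℂ := ((π : ℂ)/(b : ℂ)) ^ (1/2 : ℂ)

lemma int_gauss_shift (b a : ℝ) (hb : 0 < b) :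
    Integrable (fun t : ℝ => Real.exp (-(b * (t - a)^2))) := by
  simpa only [neg_mul] using (integrable_exp_neg_mul_sq hb).comp_sub_right a

lemma swt_rep (ε σx σk : ℝ) (hε : 0 < ε) (hσx : 0 < σx) (hσk : 0 < σk)
    (F G : ℝ → ℂ) (hFc : Continuous F) (hGc : Continuous G)
    (MF : ℝ) (hMF : ∀ t, ‖F t‖ ≤ MF) (CG : ℝ) (hCG : ∀ t, ‖G t‖ ≤ CG * (1 + t^2)⁻¹)
    (x k : ℝ) :
    (∫ x' : ℝ, ∫ k' : ℝ,
      (Real.exp (-(2 * π * (x - x')^2 / (ε * σx^2)) - 2 * π * (k - k')^2 / (ε * σk^2)) : ℂ) *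
        ∫ y : ℝ, Complex.exp (-(2 * π * Complex.I * k' * y)) * F (x' + ε * y / 2) *
          G (x' - ε * y / 2))
      = ∫ p : ℝ × ℝ,
          phi (ftc (2*π/(ε*σk^2))) (2*π/(ε*σx^2)) (π^2/(2*π/(ε*σk^2))) ε F G x k p := by
  have hb : (0:ℝ) < 2*π/(ε*σk^2) := by positivity
  have hd : (0:ℝ) < π^2/(2*π/(ε*σk^2)) := by positivity
  have hcx : (0:ℝ) < 2*π/(ε*σx^2) := by positivity
  have hMF0 : 0 ≤ MF := le_trans (norm_nonneg _) (hMF 0)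
  have hCG0 : 0 ≤ CG := by
    have h := (norm_nonneg (G 0)).trans (hCG 0)
    simpa using h
  have hGb : ∀ t, ‖G t‖ ≤ CG := by
    intro t
    refine (hCG t).trans ?_
    have h1 : (1 + t^2)⁻¹ ≤ 1 := by
      rw [inv_le_one_iff₀]
      right; nlinarith [sq_nonneg t]
    nlinarith
  -- inner step
  have hstep : ∀ x' : ℝ,
      (∫ k' : ℝ,
        (Real.exp (-(2 * π * (x - x')^2 / (ε * σx^2)) - 2 * π * (k - k')^2 / (ε * σk^2)) : ℂ) *
          ∫ y : ℝ, Complex.exp (-(2 * π * Complex.I * k' * y)) * F (x' + ε * y / 2) *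
            G (x' - ε * y / 2))
      = ∫ y : ℝ, phi (ftc (2*π/(ε*σk^2))) (2*π/(ε*σx^2)) (π^2/(2*π/(ε*σk^2))) ε F G x k
          (x', y) := by
    intro x'
    have hsplit : ∀ k' : ℝ,
        (Real.exp (-(2 * π * (x - x')^2 / (ε * σx^2)) - 2 * π * (k - k')^2 / (ε * σk^2)) : ℂ)
        = (Real.exp (-(2*π/(ε*σx^2) * (x - x')^2)) : ℂ) *
          (Real.exp (-(2*π/(ε*σk^2) * (k' - k)^2)) : ℂ) := by
      intro k'
      rw [← Complex.ofReal_mul, ← Real.exp_add]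
      congr 2
      ring
    have e2 : ∀ k' : ℝ,
        (Real.exp (-(2*π/(ε*σk^2) * (k' - k)^2)) : ℂ) *
          (∫ y : ℝ, Complex.exp (-(2 * π * Complex.I * k' * y)) * F (x' + ε * y / 2) *
            G (x' - ε * y / 2))
        = ∫ y : ℝ, (Real.exp (-(2*π/(ε*σk^2) * (k' - k)^2)) : ℂ) *
            Complex.exp ((-(2*π*k'*y) : ℝ) * Complex.I) *
            (F (x' + ε * y / 2) * G (x' - ε * y / 2)) := by
      intro k'
      rw [← MeasureTheory.integral_const_mul]
      refine integral_congr_ae (Filter.Eventually.of_forall fun y => ?_)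
      dsimp only
      have hph : Complex.exp (-(2 * π * Complex.I * k' * y)) =
          Complex.exp ((-(2*π*k'*y) : ℝ) * Complex.I) := by
        congr 1; push_cast; ring
      rw [hph]; ring
    have estep : ∀ k' : ℝ,
        (Real.exp (-(2 * π * (x - x')^2 / (ε * σx^2)) - 2 * π * (k - k')^2 / (ε * σk^2)) : ℂ) *
          (∫ y : ℝ, Complex.exp (-(2 * π * Complex.I * k' * y)) * F (x' + ε * y / 2) *
            G (x' - ε * y / 2))
        = (Real.exp (-(2*π/(ε*σx^2) * (x - x')^2)) : ℂ) *
          ∫ y : ℝ, (Real.exp (-(2*π/(ε*σk^2) * (k' - k)^2)) : ℂ) *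
            Complex.exp ((-(2*π*k'*y) : ℝ) * Complex.I) *
            (F (x' + ε * y / 2) * G (x' - ε * y / 2)) := by
      intro k'
      rw [hsplit k', mul_assoc, e2 k']
    simp only [estep]
    rw [MeasureTheory.integral_const_mul]
    -- swap the k' and y integrals
    have hdecay : Integrable (fun y : ℝ => MF * CG * (1 + (x' - ε*y/2)^2)⁻¹) := by
      have h0 := (intCauchy (-(ε/2)) x' (by intro h; nlinarith)).const_mul (MF * CG)
      have he : ∀ y : ℝ, (-(ε/2))*y + x' = x' - ε*y/2 := by intro y; ring
      simpa only [he] using h0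
    have hswapInt : Integrable (Function.uncurry fun k' y =>
        (Real.exp (-(2*π/(ε*σk^2) * (k' - k)^2)) : ℂ) *
          Complex.exp ((-(2*π*k'*y) : ℝ) * Complex.I) *
          (F (x' + ε * y / 2) * G (x' - ε * y / 2))) (volume.prod volume) := by
      refine Integrable.mono' ((int_gauss_shift (2*π/(ε*σk^2)) k hb).mul_prod hdecay) ?_
        (Filter.Eventually.of_forall fun z => ?_)
      · apply Continuous.aestronglyMeasurable
        fun_prop
      · obtain ⟨a, b⟩ := z
        simp only [Function.uncurry_apply_pair]
        rw [norm_mul, norm_mul, Complex.norm_real, Real.norm_eq_abs,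
          abs_of_pos (Real.exp_pos _), Complex.norm_exp_ofReal_mul_I,
          mul_one, norm_mul]
        have h1 : ‖F (x' + ε * b / 2)‖ * ‖G (x' - ε * b / 2)‖ ≤
            MF * (CG * (1 + (x' - ε*b/2)^2)⁻¹) :=
          mul_le_mul (hMF _) (hCG _) (norm_nonneg _) hMF0
        have h2 := mul_le_mul_of_nonneg_left h1 (Real.exp_pos
          (-(2*π/(ε*σk^2) * (a - k)^2))).le
        exact h2.trans_eq (by ring)
    rw [integral_integral_swap hswapInt]
    simp only [MeasureTheory.integral_mul_const]
    simp only [gauss_ft (2*π/(ε*σk^2)) hb k]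
    rw [← MeasureTheory.integral_const_mul]
    refine integral_congr_ae (Filter.Eventually.of_forall fun y => ?_)
    unfold phi ftc
    dsimp only
    ring
  simp only [hstep]
  -- combine into a product integral
  have hIphi : Integrable (fun p : ℝ × ℝ =>
      phi (ftc (2*π/(ε*σk^2))) (2*π/(ε*σx^2)) (π^2/(2*π/(ε*σk^2))) ε F G x k p) := by
    have h := integrable_weight_phi (c := ftc (2*π/(ε*σk^2))) ε hcx hd hFc hGc hMF hGb x k
      (w := fun _ => (1 : ℂ)) continuous_const (Cw := 1)
      (fun p => by
        have h1 : (0:ℝ) ≤ |p.1 - x| := abs_nonneg _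
        have h2 : (0:ℝ) ≤ |p.2| := abs_nonneg _
        simp only [norm_one]
        nlinarith)
    simpa using h
  have hIphi' : Integrable (Function.uncurry fun x' y =>
      phi (ftc (2*π/(ε*σk^2))) (2*π/(ε*σx^2)) (π^2/(2*π/(ε*σk^2))) ε F G x k (x', y))
      (volume.prod volume) := by
    have he : (Function.uncurry fun x' y =>
        phi (ftc (2*π/(ε*σk^2))) (2*π/(ε*σx^2)) (π^2/(2*π/(ε*σk^2))) ε F G x k (x', y))
        = fun p : ℝ × ℝ =>
          phi (ftc (2*π/(ε*σk^2))) (2*π/(ε*σx^2)) (π^2/(2*π/(ε*σk^2))) ε F G x k p := by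
      funext p; simp [Function.uncurry]
    rw [he, ← Measure.volume_eq_prod]
    exact hIphi
  rw [MeasureTheory.integral_integral hIphi']
  rw [← Measure.volume_eq_prod]
lemma schwartz_decay2 (g : SchwartzMap ℝ ℂ) : ∃ C, ∀ t : ℝ, ‖g t‖ ≤ C * (1 + t^2)⁻¹ := by
  obtain ⟨C0, h0⟩ := g.decay 0 0
  obtain ⟨C2, h2⟩ := g.decay 2 0
  refine ⟨C0 + C2, fun t => ?_⟩
  have h0t := h0.2 t
  have h2t := h2.2 t
  simp only [pow_zero, one_mul, norm_iteratedFDeriv_zero, Real.norm_eq_abs] at h0t h2t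
  have hpos : (0:ℝ) < 1 + t^2 := by positivity
  have hsq : |t|^2 = t^2 := sq_abs t
  have key : ‖g t‖ * (1 + t^2) ≤ C0 + C2 := by nlinarith [norm_nonneg (g t)]
  calc ‖g t‖ = (‖g t‖ * (1 + t^2)) * (1 + t^2)⁻¹ := by field_simp
    _ ≤ (C0 + C2) * (1 + t^2)⁻¹ := by
        exact mul_le_mul_of_nonneg_right key (inv_nonneg.2 hpos.le)

lemma schwartz_decay2_mul (g : SchwartzMap ℝ ℂ) :
    ∃ C, ∀ t : ℝ, ‖(t : ℂ) * g t‖ ≤ C * (1 + t^2)⁻¹ := by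
  obtain ⟨C1, h1⟩ := g.decay 1 0
  obtain ⟨C3, h3⟩ := g.decay 3 0
  refine ⟨C1 + C3, fun t => ?_⟩
  have h1t := h1.2 t
  have h3t := h3.2 t
  simp only [pow_one, norm_iteratedFDeriv_zero, Real.norm_eq_abs] at h1t h3t
  have hpos : (0:ℝ) < 1 + t^2 := by positivity
  have hnm : ‖(t : ℂ) * g t‖ = |t| * ‖g t‖ := by
    rw [norm_mul, Complex.norm_real, Real.norm_eq_abs]
  have hcube : |t|^3 = t^2 * |t| := by
    rw [pow_succ, _root_.sq_abs]
  have key : (|t| * ‖g t‖) * (1 + t^2) ≤ C1 + C3 := by nlinarith [norm_nonneg (g t), abs_nonneg t]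
  rw [hnm]
  calc |t| * ‖g t‖ = ((|t| * ‖g t‖) * (1 + t^2)) * (1 + t^2)⁻¹ := by field_simp
    _ ≤ (C1 + C3) * (1 + t^2)⁻¹ := mul_le_mul_of_nonneg_right key (inv_nonneg.2 hpos.le)

/-- Identity (3b): the SWT of `(f, y·g(y))` in terms of the SWT of `(f,g)` and its
phase-space derivatives. -/
theorem swt_mul_right (ε σx σk : ℝ) (hε : 0 < ε) (hσx : 0 < σx) (hσk : 0 < σk)
    (f g : SchwartzMap ℝ ℂ) (x k : ℝ) :
    swt ε σx σk (⇑f) (fun y => (y : ℂ) * g y) x k =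
      (x : ℂ) * swt ε σx σk (⇑f) (⇑g) x k
      - Complex.I * ε / (4 * π) * deriv (fun k' => swt ε σx σk (⇑f) (⇑g) x k') k
      + (ε * σx ^ 2 / (4 * π) : ℂ) * deriv (fun x' => swt ε σx σk (⇑f) (⇑g) x' k) x := by
  have hb : (0:ℝ) < 2*π/(ε*σk^2) := by positivity
  have hd : (0:ℝ) < π^2/(2*π/(ε*σk^2)) := by positivity
  have hcx : (0:ℝ) < 2*π/(ε*σx^2) := by positivity
  obtain ⟨MF, hMF⟩ : ∃ C, ∀ t : ℝ, ‖(⇑f : ℝ → ℂ) t‖ ≤ C := by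
    obtain ⟨C0, h0⟩ := f.decay 0 0
    exact ⟨C0, fun t => by simpa using h0.2 t⟩
  obtain ⟨CG, hCGraw⟩ := schwartz_decay2 g
  obtain ⟨CG1, hCG1raw⟩ := schwartz_decay2_mul g
  set GG : ℝ → ℂ := fun t => (starRingEnd ℂ) (g t) with hGGdef
  set GG1 : ℝ → ℂ := fun t => (starRingEnd ℂ) ((t:ℂ) * g t) with hGG1def
  have hGGc : Continuous GG := Complex.continuous_conj.comp g.continuous
  have hGG1c : Continuous GG1 :=
    Complex.continuous_conj.comp (Complex.continuous_ofReal.mul g.continuous)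
  have hCGG : ∀ t, ‖GG t‖ ≤ CG * (1+t^2)⁻¹ := fun t => by
    simpa [hGGdef, RCLike.norm_conj] using hCGraw t
  have hCGG1 : ∀ t, ‖GG1 t‖ ≤ CG1 * (1+t^2)⁻¹ := fun t => by
    simpa [hGG1def, RCLike.norm_conj] using hCG1raw t
  have hCG0 : 0 ≤ CG := by
    have h := (norm_nonneg (g 0)).trans (hCGraw 0); simpa using h
  have hGGb : ∀ t, ‖GG t‖ ≤ CG := fun t => (hCGG t).trans (by
    have h1 : (1 + t^2)⁻¹ ≤ 1 := by rw [inv_le_one_iff₀]; right; nlinarith [sq_nonneg t]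
    nlinarith)
  -- representations
  have hrep : ∀ (x k : ℝ), swt ε σx σk (⇑f) (⇑g) x k
      = (2 / (ε * σx * σk) : ℂ) *
        ∫ p : ℝ×ℝ, phi (ftc (2*π/(ε*σk^2))) (2*π/(ε*σx^2)) (π^2/(2*π/(ε*σk^2))) ε (⇑f) GG
          x k p := by
    intro x k
    rw [swt]
    congr 1
    exact swt_rep ε σx σk hε hσx hσk (⇑f) GG f.continuous hGGc MF hMF CG hCGG x k
  have hrep1 : swt ε σx σk (⇑f) (fun y => (y : ℂ) * g y) x k
      = (2 / (ε * σx * σk) : ℂ) *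
        ∫ p : ℝ×ℝ, phi (ftc (2*π/(ε*σk^2))) (2*π/(ε*σx^2)) (π^2/(2*π/(ε*σk^2))) ε (⇑f) GG1
          x k p := by
    rw [swt]
    congr 1
    exact swt_rep ε σx σk hε hσx hσk (⇑f) GG1 f.continuous hGG1c MF hMF CG1 hCGG1 x k
  have hk := hasDerivAt_int_phi_k (ftc (2*π/(ε*σk^2))) ε hcx hd f.continuous hGGc hMF hGGb x k
  have hx := hasDerivAt_int_phi_x (ftc (2*π/(ε*σk^2))) ε hcx hd f.continuous hGGc hMF hGGb x k
  have hderivk : deriv (fun k' => swt ε σx σk (⇑f) (⇑g) x k') k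
      = (2 / (ε * σx * σk) : ℂ) * ∫ p : ℝ×ℝ, ((-(2*π*p.2) : ℝ) : ℂ) * Complex.I *
          phi (ftc (2*π/(ε*σk^2))) (2*π/(ε*σx^2)) (π^2/(2*π/(ε*σk^2))) ε (⇑f) GG x k p := by
    have hfe : (fun k' => swt ε σx σk (⇑f) (⇑g) x k') = fun k' => (2 / (ε * σx * σk) : ℂ) *
        ∫ p : ℝ×ℝ, phi (ftc (2*π/(ε*σk^2))) (2*π/(ε*σx^2)) (π^2/(2*π/(ε*σk^2))) ε (⇑f) GG
          x k' p := funext fun k' => hrep x k'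
    rw [hfe]
    exact (hk.const_mul ((2 / (ε * σx * σk) : ℂ))).deriv
  have hderivx : deriv (fun x' => swt ε σx σk (⇑f) (⇑g) x' k) x
      = (2 / (ε * σx * σk) : ℂ) * ∫ p : ℝ×ℝ, ((-(2*(2*π/(ε*σx^2))*(x - p.1)) : ℝ) : ℂ) *
          phi (ftc (2*π/(ε*σk^2))) (2*π/(ε*σx^2)) (π^2/(2*π/(ε*σk^2))) ε (⇑f) GG x k p := by
    have hfe : (fun x' => swt ε σx σk (⇑f) (⇑g) x' k) = fun x' => (2 / (ε * σx * σk) : ℂ) *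
        ∫ p : ℝ×ℝ, phi (ftc (2*π/(ε*σk^2))) (2*π/(ε*σx^2)) (π^2/(2*π/(ε*σk^2))) ε (⇑f) GG
          x' k p := funext fun x' => hrep x' k
    rw [hfe]
    exact (hx.const_mul ((2 / (ε * σx * σk) : ℂ))).deriv
  -- integrability of the three integrands
  have hI0 : Integrable (fun p : ℝ×ℝ =>
      phi (ftc (2*π/(ε*σk^2))) (2*π/(ε*σx^2)) (π^2/(2*π/(ε*σk^2))) ε (⇑f) GG x k p) := by
    have h := integrable_weight_phi (c := ftc (2*π/(ε*σk^2))) ε hcx hd f.continuous hGGc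
      hMF hGGb x k (w := fun _ => (1:ℂ)) continuous_const (Cw := 1) (fun p => by
        have h1 : (0:ℝ) ≤ |p.1 - x| := abs_nonneg _
        have h2 : (0:ℝ) ≤ |p.2| := abs_nonneg _
        simp only [norm_one]; nlinarith)
    simpa using h
  have hIk : Integrable (fun p : ℝ×ℝ => ((-(2*π*p.2) : ℝ) : ℂ) * Complex.I *
      phi (ftc (2*π/(ε*σk^2))) (2*π/(ε*σx^2)) (π^2/(2*π/(ε*σk^2))) ε (⇑f) GG x k p) := by
    have h := integrable_weight_phi (c := ftc (2*π/(ε*σk^2))) ε hcx hd f.continuous hGGc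
      hMF hGGb x k (w := fun p : ℝ×ℝ => ((-(2*π*p.2) : ℝ) : ℂ) * Complex.I) (by fun_prop)
      (Cw := 2*π) (fun p => by
        rw [norm_mul, Complex.norm_I, mul_one, Complex.norm_real, Real.norm_eq_abs,
          abs_neg, abs_mul, abs_of_pos (by positivity : (0:ℝ) < 2*π)]
        have h1 : (0:ℝ) ≤ |p.1 - x| := abs_nonneg _
        have h2 : (0:ℝ) ≤ |p.2| := abs_nonneg _
        nlinarith [Real.pi_pos, mul_nonneg h1 h2])
    exact h
  have hIx : Integrable (fun p : ℝ×ℝ => ((-(2*(2*π/(ε*σx^2))*(x - p.1)) : ℝ) : ℂ) *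
      phi (ftc (2*π/(ε*σk^2))) (2*π/(ε*σx^2)) (π^2/(2*π/(ε*σk^2))) ε (⇑f) GG x k p) := by
    have h := integrable_weight_phi (c := ftc (2*π/(ε*σk^2))) ε hcx hd f.continuous hGGc
      hMF hGGb x k (w := fun p : ℝ×ℝ => ((-(2*(2*π/(ε*σx^2))*(x - p.1)) : ℝ) : ℂ))
      (by fun_prop) (Cw := 2*(2*π/(ε*σx^2))) (fun p => by
        rw [Complex.norm_real, Real.norm_eq_abs, abs_neg, abs_mul,
          abs_of_pos (by positivity : (0:ℝ) < 2*(2*π/(ε*σx^2))), abs_sub_comm x p.1]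
        have h1 : (0:ℝ) ≤ |p.1 - x| := abs_nonneg _
        have h2 : (0:ℝ) ≤ |p.2| := abs_nonneg _
        nlinarith [hcx, mul_nonneg h1 h2])
    exact h
  -- final computation
  rw [hrep1, hrep x k, hderivk, hderivx]
  have hcongr : (∫ p : ℝ×ℝ,
        phi (ftc (2*π/(ε*σk^2))) (2*π/(ε*σx^2)) (π^2/(2*π/(ε*σk^2))) ε (⇑f) GG1 x k p)
      = ∫ p : ℝ×ℝ, ((p.1 - ε*p.2/2 : ℝ) : ℂ) *
        phi (ftc (2*π/(ε*σk^2))) (2*π/(ε*σx^2)) (π^2/(2*π/(ε*σk^2))) ε (⇑f) GG x k p := by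
    refine integral_congr_ae (Filter.Eventually.of_forall fun p => ?_)
    unfold phi
    have hgg : GG1 (p.1 - ε*p.2/2) = ((p.1 - ε*p.2/2 : ℝ) : ℂ) * GG (p.1 - ε*p.2/2) := by
      simp [hGG1def, hGGdef, map_mul, Complex.conj_ofReal]
    rw [hgg]; ring
  rw [hcongr]
  have e : ∀ p : ℝ×ℝ, ((p.1 - ε*p.2/2 : ℝ) : ℂ) *
        phi (ftc (2*π/(ε*σk^2))) (2*π/(ε*σx^2)) (π^2/(2*π/(ε*σk^2))) ε (⇑f) GG x k p
      = (x:ℂ) * phi (ftc (2*π/(ε*σk^2))) (2*π/(ε*σx^2)) (π^2/(2*π/(ε*σk^2))) ε (⇑f) GG x k p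
        - (Complex.I*(ε:ℂ)/(4*(π:ℂ))) * (((-(2*π*p.2) : ℝ) : ℂ) * Complex.I *
            phi (ftc (2*π/(ε*σk^2))) (2*π/(ε*σx^2)) (π^2/(2*π/(ε*σk^2))) ε (⇑f) GG x k p)
        + ((ε:ℂ)*(σx:ℂ)^2/(4*(π:ℂ))) * (((-(2*(2*π/(ε*σx^2))*(x - p.1)) : ℝ) : ℂ) *
            phi (ftc (2*π/(ε*σk^2))) (2*π/(ε*σx^2)) (π^2/(2*π/(ε*σk^2))) ε (⇑f) GG x k p) := by
    intro p
    have hs : ((p.1 - ε*p.2/2 : ℝ) : ℂ) = (x : ℂ)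
        - (Complex.I*(ε:ℂ)/(4*(π:ℂ))) * (((-(2*π*p.2) : ℝ) : ℂ)*Complex.I)
        + ((ε:ℂ)*(σx:ℂ)^2/(4*(π:ℂ))) * ((-(2*(2*π/(ε*σx^2))*(x-p.1)) : ℝ) : ℂ) := by
      have hε' : (ε:ℂ) ≠ 0 := by exact_mod_cast hε.ne'
      have hσ' : (σx:ℂ) ≠ 0 := by exact_mod_cast hσx.ne'
      have hπ' : ((π:ℝ):ℂ) ≠ 0 := by exact_mod_cast Real.pi_ne_zero
      push_cast
      field_simp
      ring_nf
      simp only [Complex.I_sq]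
      field_simp
      ring
    rw [hs]; ring
  rw [integral_congr_ae (Filter.Eventually.of_forall e)]
  have ha : Integrable (fun p : ℝ×ℝ => (x:ℂ) *
      phi (ftc (2*π/(ε*σk^2))) (2*π/(ε*σx^2)) (π^2/(2*π/(ε*σk^2))) ε (⇑f) GG x k p) :=
    hI0.const_mul _
  have hb' : Integrable (fun p : ℝ×ℝ => (Complex.I*(ε:ℂ)/(4*(π:ℂ))) *
      (((-(2*π*p.2) : ℝ) : ℂ) * Complex.I *
        phi (ftc (2*π/(ε*σk^2))) (2*π/(ε*σx^2)) (π^2/(2*π/(ε*σk^2))) ε (⇑f) GG x k p)) :=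
    hIk.const_mul _
  have hc' : Integrable (fun p : ℝ×ℝ => ((ε:ℂ)*(σx:ℂ)^2/(4*(π:ℂ))) *
      (((-(2*(2*π/(ε*σx^2))*(x - p.1)) : ℝ) : ℂ) *
        phi (ftc (2*π/(ε*σk^2))) (2*π/(ε*σx^2)) (π^2/(2*π/(ε*σk^2))) ε (⇑f) GG x k p)) :=
    hIx.const_mul _
  have hab : Integrable (fun p : ℝ×ℝ => (x:ℂ) *
      phi (ftc (2*π/(ε*σk^2))) (2*π/(ε*σx^2)) (π^2/(2*π/(ε*σk^2))) ε (⇑f) GG x k p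
      - (Complex.I*(ε:ℂ)/(4*(π:ℂ))) * (((-(2*π*p.2) : ℝ) : ℂ) * Complex.I *
        phi (ftc (2*π/(ε*σk^2))) (2*π/(ε*σx^2)) (π^2/(2*π/(ε*σk^2))) ε (⇑f) GG x k p)) :=
    ha.sub hb'
  rw [integral_add hab hc', integral_sub ha hb',
      MeasureTheory.integral_const_mul, MeasureTheory.integral_const_mul,
      MeasureTheory.integral_const_mul]
  ring
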